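/- Let X, Y, Z be square-integrable random variables, let α > 0, set a = √α and b = √(1+α) − √α, and define X' = aX + bE[X|Z], Y' = aY + bE[Y|Z]. Then for any vector h, E[‖Y' − hᵀX'‖²] = α E[‖Y − hᵀX‖²] + E[‖E[Y|Z] − hᵀE[X|Z]‖²]. -/

import Mathlib

open MeasureTheory

lemma aux_integrable_mul_of_memℒp_two {Ω : Type*} {m0 : MeasurableSpace Ω} {μ : Measure Ω}
    {f g : Ω → ℝ} (hf : MemLp f 2 μ) (hg : MemLp g 2 μ) :
    Integrable (fun ω => f ω * g ω) μ := by
  have h := L2.integrable_inner (𝕜 := ℝ) (hf.toLp f) (hg.toLp g)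
  refine h.congr ?_
  filter_upwards [hf.coeFn_toLp, hg.coeFn_toLp] with x h1 h2
  simp [h1, h2, RCLike.inner_apply, mul_comm]

lemma aux_memℒp_two_condexp {Ω : Type*} {m m0 : MeasurableSpace Ω} {μ : Measure Ω}
    [IsFiniteMeasure μ] (hm : m ≤ m0) {f : Ω → ℝ} (hf : MemLp f 2 μ) :
    MemLp (μ[f|m]) 2 μ := by
  haveI : SigmaFinite (μ.trim hm) := inferInstance
  have hFf : (fun x => (condExpL2 ℝ ℝ hm (hf.toLp f) : Ω →₂[μ] ℝ) x) =ᵐ[μ] μ[f|m] := by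
    refine ae_eq_condExp_of_forall_setIntegral_eq hm (hf.integrable one_le_two)
      (fun s _ _ => (integrable_condExpL2_of_isFiniteMeasure hm).integrableOn)
      (fun s hs hμs => ?_) (aestronglyMeasurable_condExpL2 hm _)
    rw [integral_condExpL2_eq hm (hf.toLp f) hs hμs.ne]
    exact setIntegral_congr_ae (hm s hs) (hf.coeFn_toLp.mono fun x hx _ => hx)
  exact (Lp.memLp _).ae_eq hFf

/-- The OLS objective on IVL-transformed data `X' = aX + bE[X|Z]`, `Y' = aY + bE[Y|Z]`
(with `a = √α`, `b = √(1+α) − √α`) equals the `IVL_α` regularized objective: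
`E[(Y' − hᵀX')²] = α E[(Y − hᵀX)²] + E[(E[Y|Z] − hᵀE[X|Z])²]`. -/
theorem ivl_transformed_ols {Ω : Type*} [MeasurableSpace Ω] (μ : Measure Ω)
    [IsProbabilityMeasure μ] {𝒵 : Type*} [MeasurableSpace 𝒵]
    (m : ℕ) (X : Ω → Fin m → ℝ) (Y : Ω → ℝ) (Z : Ω → 𝒵) (hZ : Measurable Z)
    (hY : MemLp Y 2 μ) (hX : ∀ i, MemLp (fun ω => X ω i) 2 μ)
    (α : ℝ) (hα : 0 < α) (h : Fin m → ℝ) :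
    let mZ := MeasurableSpace.comap Z inferInstance
    let a := Real.sqrt α
    let b := Real.sqrt (1 + α) - Real.sqrt α
    let X' : Ω → Fin m → ℝ := fun ω i => a * X ω i + b * (μ[fun ω => X ω i|mZ]) ω
    let Y' : Ω → ℝ := fun ω => a * Y ω + b * (μ[Y|mZ]) ω
    ∫ ω, (Y' ω - ∑ i, h i * X' ω i) ^ 2 ∂μ
      = α * ∫ ω, (Y ω - ∑ i, h i * X ω i) ^ 2 ∂μ
        + ∫ ω, ((μ[Y|mZ]) ω - ∑ i, h i * (μ[fun ω => X ω i|mZ]) ω) ^ 2 ∂μ := by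
  have hm0 := hZ.comap_le
  intro mZ a b X' Y'
  have hm : mZ ≤ _ := hm0
  haveI : SigmaFinite (μ.trim hm) := inferInstance
  set R : Ω → ℝ := fun ω => Y ω - ∑ i, h i * X ω i with hRdef
  set g : Ω → ℝ := fun ω => (μ[Y|mZ]) ω - ∑ i, h i * (μ[fun ω => X ω i|mZ]) ω with hgdef
  have hSum : MemLp (fun ω => ∑ i, h i * X ω i) 2 μ := by
    have := memLp_finset_sum (μ := μ) (p := 2) Finset.univ
      (f := fun i ω => h i * X ω i) (fun i _ => (hX i).const_mul (h i))
    exact this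
  have hR : MemLp R 2 μ := hY.sub hSum
  -- conditional expectation of R
  have hXint : ∀ i, Integrable (fun ω => h i * X ω i) μ := fun i =>
    ((hX i).const_mul (h i)).integrable one_le_two
  have hsum_cond : μ[fun ω => ∑ i, h i * X ω i|mZ]
      =ᵐ[μ] fun ω => ∑ i, h i * (μ[fun ω => X ω i|mZ]) ω := by
    have h1 : (fun ω => ∑ i, h i * X ω i) = ∑ i, (fun ω => h i * X ω i) := by
      funext ω; simp
    have h2 := condExp_finsetSum (μ := μ) (m := mZ) (s := Finset.univ)
      (f := fun i ω => h i * X ω i) (fun i _ => hXint i)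
    rw [← h1] at h2
    refine h2.trans ?_
    have h3 : ∀ᵐ ω ∂μ, ∀ i : Fin m,
        (μ[fun ω => h i * X ω i|mZ]) ω = h i * (μ[fun ω => X ω i|mZ]) ω := by
      rw [ae_all_iff]
      intro i
      have := condExp_smul (μ := μ) (m := mZ) (h i) (fun ω => X ω i)
      filter_upwards [this] with ω hω
      exact hω
    filter_upwards [h3] with ω hω
    simp only [Finset.sum_apply]
    exact Finset.sum_congr rfl fun i _ => hω i
  have hg_eq : μ[R|mZ] =ᵐ[μ] g := by
    have := condExp_sub (μ := μ) (m := mZ) (hY.integrable one_le_two)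
      (hSum.integrable one_le_two)
    refine this.trans ?_
    filter_upwards [hsum_cond] with ω hω
    simp only [Pi.sub_apply, hgdef, hω]
  have hcond : MemLp (μ[R|mZ]) 2 μ := aux_memℒp_two_condexp hm hR
  have hg2 : MemLp g 2 μ := hcond.ae_eq hg_eq
  have hRg_int : Integrable (fun ω => R ω * g ω) μ := aux_integrable_mul_of_memℒp_two hR hg2
  have hcondR_int : Integrable ((μ[R|mZ]) * R) μ :=
    aux_integrable_mul_of_memℒp_two hcond hR
  -- the key cross-term identity
  have key : ∫ ω, R ω * g ω ∂μ = ∫ ω, g ω ^ 2 ∂μ := by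
    have pull : μ[(μ[R|mZ]) * R|mZ] =ᵐ[μ] (μ[R|mZ]) * μ[R|mZ] :=
      condExp_mul_of_stronglyMeasurable_left stronglyMeasurable_condExp hcondR_int
        (hR.integrable one_le_two)
    calc ∫ ω, R ω * g ω ∂μ = ∫ ω, ((μ[R|mZ]) * R) ω ∂μ := by
          refine integral_congr_ae ?_
          filter_upwards [hg_eq] with ω hω
          simp [← hω, mul_comm]
      _ = ∫ ω, (μ[(μ[R|mZ]) * R|mZ]) ω ∂μ := (integral_condExp hm).symm
      _ = ∫ ω, g ω ^ 2 ∂μ := by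
          refine integral_congr_ae ?_
          filter_upwards [pull, hg_eq] with ω h1 h2
          simp only [h1, Pi.mul_apply, h2, sq]
  -- pointwise identity for the transformed residual
  have hpt : ∀ ω, (Y' ω - ∑ i, h i * X' ω i) = a * R ω + b * g ω := by
    intro ω
    simp only [Y', X', hRdef, hgdef]
    have : ∑ i, h i * (a * X ω i + b * (μ[fun ω => X ω i|mZ]) ω)
        = a * ∑ i, h i * X ω i + b * ∑ i, h i * (μ[fun ω => X ω i|mZ]) ω := by
      rw [Finset.mul_sum, Finset.mul_sum, ← Finset.sum_add_distrib]
      exact Finset.sum_congr rfl fun i _ => by ring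
    rw [this]; ring
  -- coefficient identities
  have ha2 : a ^ 2 = α := Real.sq_sqrt hα.le
  have hab : (a + b) ^ 2 = 1 + α := by
    have : a + b = Real.sqrt (1 + α) := by simp [a, b]
    rw [this]; exact Real.sq_sqrt (by linarith)
  have hcoef : 2 * a * b + b ^ 2 = 1 := by nlinarith
  -- expand and integrate
  have hexp : ∫ ω, (Y' ω - ∑ i, h i * X' ω i) ^ 2 ∂μ
      = a ^ 2 * ∫ ω, R ω ^ 2 ∂μ
        + ((2 * a * b) * ∫ ω, R ω * g ω ∂μ + b ^ 2 * ∫ ω, g ω ^ 2 ∂μ) := by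
    have : (fun ω => (Y' ω - ∑ i, h i * X' ω i) ^ 2)
        = fun ω => a ^ 2 * R ω ^ 2 + ((2 * a * b) * (R ω * g ω) + b ^ 2 * g ω ^ 2) := by
      funext ω; rw [hpt ω]; ring
    have i1 : Integrable (fun ω => a ^ 2 * R ω ^ 2) μ := hR.integrable_sq.const_mul _
    have i2 : Integrable (fun ω => 2 * a * b * (R ω * g ω)) μ := hRg_int.const_mul _
    have i3 : Integrable (fun ω => b ^ 2 * g ω ^ 2) μ := hg2.integrable_sq.const_mul _
    have i23 : Integrable (fun ω => 2 * a * b * (R ω * g ω) + b ^ 2 * g ω ^ 2) μ := i2.add i3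
    rw [this, integral_add i1 i23, integral_add i2 i3,
      integral_const_mul, integral_const_mul, integral_const_mul]
  rw [hexp, key, ha2]
  have : ∫ ω, ((μ[Y|mZ]) ω - ∑ i, h i * (μ[fun ω => X ω i|mZ]) ω) ^ 2 ∂μ
      = ∫ ω, g ω ^ 2 ∂μ := rfl
  rw [this]
  linear_combination (∫ ω, g ω ^ 2 ∂μ) * hcoef
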